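/- Abstraction soundness for bounded reachability (core of the soundness theorem): let (S, P) be a finite DTMC, h : S → Ŝ a surjective abstraction function, and B ⊆ S an h-saturated target set with abstract target B̂ = h(B). Let minreach and maxreach be the value-iteration sequences of the induced abstract MDP with target B̂. Then for every n ∈ ℕ and every s ∈ S, minreach n (h s) ≤ reach n s ≤ maxreach n (h s), where reach is the n-step reachability of B in the concrete DTMC. -/
import Mathlib


open scoped Classical

/-- Concretization of an abstract state: `γ(t) = h⁻¹({t})`, as a finset. -/
noncomputable def gammaSet {S T : Type*} [Fintype S] (h : S → T) (t : T) : Finset S :=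
  Finset.univ.filter fun s => h s = t

/-- The concretization of every abstract state is nonempty when `h` is surjective. -/
theorem gammaSet_nonempty {S T : Type*} [Fintype S] (h : S → T)
    (hsurj : Function.Surjective h) (t : T) : (gammaSet h t).Nonempty := by
  obtain ⟨s, hs⟩ := hsurj t
  exact ⟨s, by simp [gammaSet, hs]⟩

/-- Abstract transition function of the induced abstract MDP:
`P̂ ŝ α ŝ' = ∑_{s' ∈ γ(ŝ')} P α s'` (independent of the abstract source state). -/
noncomputable def absP {S T : Type*} [Fintype S] (P : S → S → ℝ) (h : S → T)
    (α : S) (t' : T) : ℝ :=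
  ∑ s' ∈ gammaSet h t', P α s'

/-- Minimum value iteration of the induced abstract MDP (state space `T`, actions
`S`, enabled actions `Act(t) = γ(t)`) for an abstract target set `Bh`. -/
noncomputable def absMinReach {S T : Type*} [Fintype S] [Fintype T]
    (P : S → S → ℝ) (h : S → T) (hsurj : Function.Surjective h) (Bh : Set T) :
    ℕ → T → ℝ
  | 0, t => if t ∈ Bh then 1 else 0
  | n + 1, t =>
      if t ∈ Bh then 1
      else (gammaSet h t).inf' (gammaSet_nonempty h hsurj t) fun α =>
        ∑ t' : T, absP P h α t' * absMinReach P h hsurj Bh n t'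

/-- Maximum value iteration of the induced abstract MDP for target `Bh`. -/
noncomputable def absMaxReach {S T : Type*} [Fintype S] [Fintype T]
    (P : S → S → ℝ) (h : S → T) (hsurj : Function.Surjective h) (Bh : Set T) :
    ℕ → T → ℝ
  | 0, t => if t ∈ Bh then 1 else 0
  | n + 1, t =>
      if t ∈ Bh then 1
      else (gammaSet h t).sup' (gammaSet_nonempty h hsurj t) fun α =>
        ∑ t' : T, absP P h α t' * absMaxReach P h hsurj Bh n t'

/-- n-step reachability values of a target set `B` in the concrete DTMC. -/
noncomputable def reachN {S : Type*} [Fintype S] (P : S → S → ℝ) (B : Set S) :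
    ℕ → S → ℝ
  | 0, s => if s ∈ B then 1 else 0
  | n + 1, s => if s ∈ B then 1 else ∑ s' : S, P s s' * reachN P B n s'

theorem absP_sum_eq {S T : Type*} [Fintype S] [Fintype T] (P : S → S → ℝ)
    (h : S → T) (α : S) (g : T → ℝ) :
    ∑ t' : T, absP P h α t' * g t' = ∑ s' : S, P α s' * g (h s') := by
  have : ∀ t' : T, absP P h α t' * g t' = ∑ s' ∈ gammaSet h t', P α s' * g (h s') := by
    intro t'
    rw [absP, Finset.sum_mul]
    refine Finset.sum_congr rfl fun s' hs' => ?_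
    simp only [gammaSet, Finset.mem_filter] at hs'
    rw [hs'.2]
  simp only [this, gammaSet]
  exact Finset.sum_fiberwise _ _ _

/-- Abstraction soundness for bounded reachability: let (S, P) be a
finite DTMC, h : S → Ŝ a surjective abstraction function, and B ⊆ S an h-saturated
target set with abstract target B̂ = h(B). Then for every n and every concrete
state s, `minreach n (h s) ≤ reach n s ≤ maxreach n (h s)`. -/
theorem abstraction_sound_bounded_reach {S T : Type*}
    [Fintype S] [Nonempty S] [Fintype T]
    (P : S → S → ℝ)
    (hP : ∀ s s' : S, 0 ≤ P s s')
    (hsum : ∀ s : S, ∑ s' : S, P s s' = 1)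
    (h : S → T) (hsurj : Function.Surjective h)
    (B : Set S) (hsat : B = h ⁻¹' (h '' B)) :
    ∀ (n : ℕ) (s : S),
      absMinReach P h hsurj (h '' B) n (h s) ≤ reachN P B n s ∧
      reachN P B n s ≤ absMaxReach P h hsurj (h '' B) n (h s) := by
  have hmem : ∀ s : S, s ∈ B ↔ h s ∈ h '' B := by
    intro s
    constructor
    · exact fun hs => ⟨s, hs, rfl⟩
    · intro hs; rw [hsat]; exact hs
  intro n
  induction n with
  | zero =>
      intro s
      simp only [absMinReach, absMaxReach, reachN, hmem s]
      exact ⟨le_refl _, le_refl _⟩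
  | succ n ih =>
      intro s
      by_cases hs : s ∈ B
      · simp [absMinReach, absMaxReach, reachN, hs, (hmem s).mp hs]
      · have hns : h s ∉ h '' B := fun hc => hs ((hmem s).mpr hc)
        have hsγ : s ∈ gammaSet h (h s) := by simp [gammaSet]
        simp only [absMinReach, absMaxReach, reachN, hs, hns, if_neg, if_false]
        constructor
        · refine le_trans (Finset.inf'_le _ hsγ) ?_
          rw [absP_sum_eq]
          exact Finset.sum_le_sum fun s' _ =>
            mul_le_mul_of_nonneg_left (ih s').1 (hP s s')
        · refine le_trans ?_ (Finset.le_sup' _ hsγ)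
          rw [absP_sum_eq]
          exact Finset.sum_le_sum fun s' _ =>
            mul_le_mul_of_nonneg_left (ih s').2 (hP s s')
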